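/- Let G be an unmixed bipartite graph on vertex set {x₁,...,x_n} ∪ {y₁,...,y_n} with {x_i,y_i} ∈ E(G) for all i. Then every minimal vertex cover C of G has the form {x_i : i ∈ A} ∪ {y_j : j ∉ A} for some subset A ⊆ {1,...,n}; in particular |C| = n and C contains exactly one of x_i, y_i for each i. -/

import Mathlib

/-- `C` is a vertex cover of `G`. -/
def IsVertexCover {V : Type*} (G : SimpleGraph V) (C : Finset V) : Prop :=
  ∀ a b : V, G.Adj a b → a ∈ C ∨ b ∈ C

/-- `C` is a minimal vertex cover of `G`. -/
def IsMinimalVertexCover {V : Type*} (G : SimpleGraph V) (C : Finset V) : Prop :=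
  IsVertexCover G C ∧ ∀ C' ⊂ C, ¬ IsVertexCover G C'

/-- Let `G` be an unmixed bipartite graph on `{x₁,...,xₙ} ∪ {y₁,...,yₙ}`
(encoded as `Fin n ⊕ Fin n`, `xᵢ = inl i`, `yᵢ = inr i`) with `{xᵢ, yᵢ}` an edge for
all `i`. Then every minimal vertex cover `C` has the form
`{xᵢ : i ∈ A} ∪ {yⱼ : j ∉ A}` for some `A ⊆ {1,...,n}`; in particular `|C| = n` and
`C` contains exactly one of `xᵢ, yᵢ` for each `i`. -/
theorem stmt14 {n : ℕ} (G : SimpleGraph (Fin n ⊕ Fin n))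
    (hbipX : ∀ i j : Fin n, ¬ G.Adj (Sum.inl i) (Sum.inl j))
    (hbipY : ∀ i j : Fin n, ¬ G.Adj (Sum.inr i) (Sum.inr j))
    (hmatch : ∀ i : Fin n, G.Adj (Sum.inl i) (Sum.inr i))
    (hunmixed : ∀ C C' : Finset (Fin n ⊕ Fin n),
      IsMinimalVertexCover G C → IsMinimalVertexCover G C' → C.card = C'.card)
    (C : Finset (Fin n ⊕ Fin n)) (hC : IsMinimalVertexCover G C) :
    (∃ A : Finset (Fin n), C = A.image Sum.inl ∪ Aᶜ.image Sum.inr) ∧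
    C.card = n ∧ ∀ i : Fin n, (Sum.inl i ∈ C ↔ Sum.inr i ∉ C) := by
  -- X = all left vertices is a minimal vertex cover of size n
  set X : Finset (Fin n ⊕ Fin n) := Finset.univ.image Sum.inl with hX
  have hXmem : ∀ v, v ∈ X ↔ ∃ i, v = Sum.inl i := by
    intro v
    simp [hX, eq_comm]
  have hXcover : IsVertexCover G X := by
    intro a b hab
    rcases a with i | i <;> rcases b with j | j
    · exact absurd hab (hbipX i j)
    · left; exact (hXmem _).2 ⟨i, rfl⟩
    · right; exact (hXmem _).2 ⟨j, rfl⟩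
    · exact absurd hab (hbipY i j)
  have hXmin : IsMinimalVertexCover G X := by
    refine ⟨hXcover, ?_⟩
    intro C' hC' hcov
    obtain ⟨v, hvX, hvC'⟩ := Finset.exists_of_ssubset hC'
    obtain ⟨i, rfl⟩ := (hXmem v).1 hvX
    rcases hcov _ _ (hmatch i) with h | h
    · exact hvC' h
    · have := (hXmem _).1 (hC'.subset h)
      obtain ⟨j, hj⟩ := this
      exact Sum.inr_ne_inl hj
  have hXcard : X.card = n := by
    rw [hX, Finset.card_image_of_injective _ Sum.inl_injective, Finset.card_univ,
      Fintype.card_fin]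
  have hCcard : C.card = n := by
    rw [hunmixed C X hC hXmin, hXcard]
  -- each pair contributes at least one
  have hone : ∀ i : Fin n, Sum.inl i ∈ C ∨ Sum.inr i ∈ C := fun i =>
    hC.1 _ _ (hmatch i)
  -- exactly one
  set g : (Fin n ⊕ Fin n) → Fin n := Sum.elim id id with hg
  have himg : C.image g = Finset.univ := by
    apply Finset.eq_univ_of_forall
    intro i
    rcases hone i with h | h
    · exact Finset.mem_image.2 ⟨_, h, rfl⟩
    · exact Finset.mem_image.2 ⟨_, h, rfl⟩
  have hinj : Set.InjOn g C := by
    apply Finset.injOn_of_card_image_eq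
    rw [himg, Finset.card_univ, Fintype.card_fin, hCcard]
  have hxor : ∀ i : Fin n, (Sum.inl i ∈ C ↔ Sum.inr i ∉ C) := by
    intro i
    constructor
    · intro hl hr
      have : (Sum.inl i : Fin n ⊕ Fin n) = Sum.inr i := hinj hl hr rfl
      exact Sum.inl_ne_inr this
    · intro hr
      rcases hone i with h | h
      · exact h
      · exact absurd h hr
  refine ⟨⟨Finset.univ.filter (fun i => Sum.inl i ∈ C), ?_⟩, hCcard, hxor⟩
  ext v
  rcases v with i | i
  · simp only [Finset.mem_union, Finset.mem_image, Finset.mem_filter, Finset.mem_univ,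
      true_and, Finset.mem_compl]
    constructor
    · intro h; exact Or.inl ⟨i, h, rfl⟩
    · rintro (⟨j, hj, hji⟩ | ⟨j, hj, hji⟩)
      · cases hji; exact hj
      · exact absurd hji Sum.inr_ne_inl
  · simp only [Finset.mem_union, Finset.mem_image, Finset.mem_filter, Finset.mem_univ,
      true_and, Finset.mem_compl]
    constructor
    · intro h
      exact Or.inr ⟨i, fun hl => (hxor i).1 hl h, rfl⟩
    · rintro (⟨j, hj, hji⟩ | ⟨j, hj, hji⟩)
      · exact absurd hji Sum.inl_ne_inr
      · cases hji
        rcases hone i with h | h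
        · exact absurd h hj
        · exact h
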